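/- The following are equivalent: (i) Ȟ₀(t) = H₀(t) for all t ∈ 𝒥; (ii) for every Borel set A ⊆ 𝒥, μ̃₀(A) = ∫_A (Š(s)/K(s−)) ν_C(ds), where μ̃₀(A) = P(C ∈ A, T > C). (Condition (ii) is the integrated form of the statement that P(T̃ = t, D̃ = 0 | C = t) = P(T > t | C ≥ t) for ν_C-almost all t ∈ 𝒥; note K(s−) ≥ S̃(s−) > 0 for s ∈ 𝒥.) -/

import Mathlib

open MeasureTheory Set ENNReal

/-- Proposition 5 (parts (5.1) ⟺ (5.3)): `Ȟ₀ = H₀` on `𝒥` is equivalent to the integrated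
form of `P(T̃ = t, D̃ = 0 | C = t) = P(T > t | C ≥ t)`. -/
theorem censoring_identity_iff_cond_prob_given_C
    {Ω : Type*} [m0 : MeasurableSpace Ω] (P : Measure Ω) [IsProbabilityMeasure P]
    (d : ℕ) (hd : 1 ≤ d)
    (T C : Ω → ℝ) (D : Ω → ℕ)
    (hT : Measurable T) (hC : Measurable C) (hD : Measurable D)
    (hTpos : ∀ᵐ ω ∂P, 0 < T ω) (hCpos : ∀ᵐ ω ∂P, 0 < C ω)
    (hDrange : ∀ ω, 1 ≤ D ω ∧ D ω ≤ d)
    -- the observed exit time T̃ = T ∧ C and exit type D̃ = D·1{T ≤ C}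
    (Tt : Ω → ℝ) (hTtdef : ∀ ω, Tt ω = min (T ω) (C ω))
    (Dt : Ω → ℕ) (hDtdef : ∀ ω, Dt ω = if T ω ≤ C ω then D ω else 0)
    -- μ̃_j(A) = P(T̃ ∈ A, D̃ = j) and ν_C(A) = P(C ∈ A)
    (μt : ℕ → Measure ℝ)
    (hμt : ∀ j, μt j = Measure.map Tt (P.restrict {ω | Dt ω = j}))
    (νC : Measure ℝ) (hνC : νC = Measure.map C P)
    -- H₀(t) = ∫_{(0,t]} K(s−)⁻¹ ν_C(ds)
    (H0 : ℝ → ℝ≥0∞) (hH0 : ∀ t, H0 t = ∫⁻ s in Ioc 0 t, (P {ω | s ≤ C ω})⁻¹ ∂νC)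
    -- Ȟ₀(t) = ∫_{(0,t]} Š(s)⁻¹ μ̃₀(ds) with Š(s) = P(T > s, C ≥ s)
    (Hc0 : ℝ → ℝ≥0∞)
    (hHc0 : ∀ t, Hc0 t = ∫⁻ s in Ioc 0 t, (P {ω | s < T ω ∧ s ≤ C ω})⁻¹ ∂(μt 0))
    (𝒥 : Set ℝ) (h𝒥 : 𝒥 = {t | 0 ≤ t ∧ 0 < P {ω | t < Tt ω}}) :
    -- (i)
    (∀ t ∈ 𝒥, Hc0 t = H0 t) ↔
    -- (ii) μ̃₀(A) = ∫_A (Š(s)/K(s−)) ν_C(ds) for all Borel A ⊆ 𝒥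
    (∀ A : Set ℝ, MeasurableSet A → A ⊆ 𝒥 →
      μt 0 A = ∫⁻ s in A, (P {ω | s < T ω ∧ s ≤ C ω}) / (P {ω | s ≤ C ω}) ∂νC) := by
  classical
  -- notation
  set Sh : ℝ → ℝ≥0∞ := fun s => P {ω | s < T ω ∧ s ≤ C ω} with hShdef
  set K : ℝ → ℝ≥0∞ := fun s => P {ω | s ≤ C ω} with hKdef
  have hShanti : Antitone Sh := fun a b hab =>
    measure_mono (fun ω hω => ⟨lt_of_le_of_lt hab hω.1, hab.trans hω.2⟩)
  have hKanti : Antitone K := fun a b hab => measure_mono (fun ω hω => hab.trans hω)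
  have hShm : Measurable Sh := hShanti.measurable
  have hKm : Measurable K := hKanti.measurable
  have hSh_le_K : ∀ s, Sh s ≤ K s := fun s => measure_mono (fun ω hω => hω.2)
  have hShtop : ∀ s, Sh s ≠ ∞ := fun s => (measure_lt_top P _).ne
  -- positivity on 𝒥
  have hSh_pos : ∀ t ∈ 𝒥, 0 < Sh t := by
    intro t ht
    rw [h𝒥] at ht
    refine lt_of_lt_of_le ht.2 (measure_mono ?_)
    intro ω hω
    simp only [mem_setOf_eq, hTtdef, lt_min_iff] at hω
    exact ⟨hω.1, hω.2.le⟩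
  -- 𝒥 is downward closed in [0, ∞)
  have hdc : ∀ t ∈ 𝒥, ∀ s, 0 ≤ s → s ≤ t → s ∈ 𝒥 := by
    intro t ht s hs0 hst
    rw [h𝒥] at ht ⊢
    exact ⟨hs0, lt_of_lt_of_le ht.2 (measure_mono fun ω hω => lt_of_le_of_lt hst hω)⟩
  have hIoc𝒥 : ∀ t ∈ 𝒥, Ioc 0 t ⊆ 𝒥 := fun t ht s hs => hdc t ht s hs.1.le hs.2
  -- measurability of Tt, Dt
  have hTtm : Measurable Tt := by
    have : Tt = fun ω => min (T ω) (C ω) := funext hTtdef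
    rw [this]; exact hT.min hC
  -- the two hazard measures and the density measure
  set L1 : Measure ℝ := (μt 0).withDensity (fun s => (Sh s)⁻¹) with hL1def
  set L2 : Measure ℝ := νC.withDensity (fun s => (K s)⁻¹) with hL2def
  have hHc0' : ∀ t, Hc0 t = L1 (Ioc 0 t) := by
    intro t; rw [hHc0 t, hL1def, withDensity_apply _ measurableSet_Ioc]
  have hH0' : ∀ t, H0 t = L2 (Ioc 0 t) := by
    intro t; rw [hH0 t, hL2def, withDensity_apply _ measurableSet_Ioc]
  -- null singletons at 0
  have hμt0_0 : μt 0 {(0 : ℝ)} = 0 := by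
    rw [hμt 0, Measure.map_apply hTtm (measurableSet_singleton 0)]
    refine le_antisymm (le_trans (Measure.restrict_le_self _) ?_) zero_le
    have hae : ∀ᵐ ω ∂P, ¬ Tt ω = 0 := by
      filter_upwards [hTpos, hCpos] with ω h1 h2
      rw [hTtdef]; exact ne_of_gt (lt_min h1 h2)
    have := ae_iff.mp hae
    simp only [not_not] at this
    have hpre : Tt ⁻¹' {(0:ℝ)} = {ω | Tt ω = 0} := by ext ω; simp
    rw [hpre, this]
  haveI hνCprob : IsProbabilityMeasure νC := by
    rw [hνC]; exact Measure.isProbabilityMeasure_map hC.aemeasurable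
  have hνC0 : νC {(0 : ℝ)} = 0 := by
    rw [hνC, Measure.map_apply hC (measurableSet_singleton 0)]
    have hae : ∀ᵐ ω ∂P, ¬ C ω = 0 := by
      filter_upwards [hCpos] with ω h1; exact ne_of_gt h1
    have := ae_iff.mp hae
    simp only [not_not] at this
    have hpre : C ⁻¹' {(0:ℝ)} = {ω | C ω = 0} := by ext ω; simp
    rw [hpre, this]
  constructor
  · -- (i) → (ii)
    intro hi A hA hA𝒥
    -- Step 1: the hazard measures agree on Ioc 0 t for t ∈ 𝒥, as measures
    have step1 : ∀ t ∈ 𝒥, L1.restrict (Ioc 0 t) = L2.restrict (Ioc 0 t) := by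
      intro t ht
      have hfin : IsFiniteMeasure (L2.restrict (Ioc 0 t)) := by
        constructor
        rw [Measure.restrict_apply_univ, hL2def, withDensity_apply _ measurableSet_Ioc]
        calc ∫⁻ s in Ioc 0 t, (K s)⁻¹ ∂νC
            ≤ ∫⁻ _ in Ioc 0 t, (Sh t)⁻¹ ∂νC := by
              refine setLIntegral_mono' measurableSet_Ioc (fun s hs => ?_)
              exact ENNReal.inv_le_inv.mpr ((hSh_le_K t).trans (hKanti hs.2))
          _ = (Sh t)⁻¹ * νC (Ioc 0 t) := setLIntegral_const _ _
          _ < ∞ := ENNReal.mul_lt_top (ENNReal.inv_lt_top.mpr (hSh_pos t ht))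
              (measure_lt_top _ _)
      have key : ∀ a : ℝ, (L2.restrict (Ioc 0 t)) (Iic a) = (L1.restrict (Ioc 0 t)) (Iic a) := by
        intro a
        rw [Measure.restrict_apply measurableSet_Iic, Measure.restrict_apply measurableSet_Iic,
          inter_comm, Ioc_inter_Iic]
        by_cases hma : 0 < min t a
        · have hm𝒥 : min t a ∈ 𝒥 := hdc t ht _ hma.le (min_le_left _ _)
          rw [← hHc0', ← hH0']
          exact (hi _ hm𝒥).symm
        · rw [Ioc_eq_empty (fun h => hma h), measure_empty, measure_empty]
      exact (Measure.ext_of_Iic (L2.restrict (Ioc 0 t)) (L1.restrict (Ioc 0 t)) key).symm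
    -- Step 2: a countable exhaustion of 𝒥 \ {0}
    have hcover : ∃ w : ℕ → ℝ, Monotone w ∧ (∀ n, w n ∈ 𝒥 ∨ w n ≤ 0) ∧
        (𝒥 \ {0}) ⊆ ⋃ n, Ioc 0 (w n) := by
      have hpos : ∀ s ∈ 𝒥 \ {0}, 0 < s := by
        intro s hs
        have h0 : 0 ≤ s := by rw [h𝒥] at hs; exact hs.1.1
        exact lt_of_le_of_ne h0 (Ne.symm hs.2)
      by_cases hne : (𝒥 \ {0}).Nonempty
      · by_cases hbdd : BddAbove (𝒥 \ {0})
        · by_cases hsup : sSup (𝒥 \ {0}) ∈ 𝒥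
          · refine ⟨fun _ => sSup (𝒥 \ {0}), monotone_const, fun _ => Or.inl hsup,
              fun s hs => mem_iUnion.2 ⟨0, hpos s hs, le_csSup hbdd hs⟩⟩
          · obtain ⟨u, hum, hut, hus⟩ := exists_seq_tendsto_sSup hne hbdd
            refine ⟨u, hum, fun n => Or.inl (hus n).1, fun s hs => ?_⟩
            have hslt : s < sSup (𝒥 \ {0}) :=
              lt_of_le_of_ne (le_csSup hbdd hs) (fun h => hsup (h ▸ hs.1))
            obtain ⟨n, hn⟩ := (hut.eventually (eventually_gt_nhds hslt)).exists
            exact mem_iUnion.2 ⟨n, hpos s hs, hn.le⟩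
        · refine ⟨fun n => (n : ℝ), fun a b hab => Nat.cast_le.2 hab, fun n => ?_, fun s hs => ?_⟩
          · obtain ⟨x, hx, hlt⟩ := not_bddAbove_iff.1 hbdd (n : ℝ)
            exact Or.inl (hdc x hx.1 _ (Nat.cast_nonneg n) hlt.le)
          · obtain ⟨n, hn⟩ := exists_nat_ge s
            exact mem_iUnion.2 ⟨n, hpos s hs, hn⟩
      · exact ⟨fun _ => 0, monotone_const, fun _ => Or.inr le_rfl,
          fun s hs => absurd ⟨s, hs⟩ hne⟩
    -- Step 3: the hazard measures agree on measurable subsets of 𝒥 \ {0}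
    have key : ∀ B : Set ℝ, MeasurableSet B → B ⊆ 𝒥 \ {0} → L1 B = L2 B := by
      obtain ⟨w, hwmono, hw𝒥, hwcov⟩ := hcover
      intro B hB hBS
      have hBU : B = ⋃ n, B ∩ Ioc 0 (w n) := by
        rw [← inter_iUnion]
        exact (inter_eq_left.mpr (hBS.trans hwcov)).symm
      have hdir : Directed (· ⊆ ·) (fun n => B ∩ Ioc 0 (w n)) := by
        refine Monotone.directed_le (fun a b hab => ?_)
        exact inter_subset_inter_right _ (Ioc_subset_Ioc_right (hwmono hab))
      have hval : ∀ n, L1 (B ∩ Ioc 0 (w n)) = L2 (B ∩ Ioc 0 (w n)) := by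
        intro n
        rcases hw𝒥 n with h | h
        · calc L1 (B ∩ Ioc 0 (w n)) = (L1.restrict (Ioc 0 (w n))) B :=
                (Measure.restrict_apply hB).symm
            _ = (L2.restrict (Ioc 0 (w n))) B := by rw [step1 _ h]
            _ = L2 (B ∩ Ioc 0 (w n)) := Measure.restrict_apply hB
        · rw [Ioc_eq_empty (fun hc => absurd h (not_le.mpr hc)), inter_empty,
            measure_empty, measure_empty]
      rw [hBU, hdir.measure_iUnion, hdir.measure_iUnion]
      exact iSup_congr hval
    -- Step 4: conclude
    set B : Set ℝ := A \ {0} with hBdef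
    have hB : MeasurableSet B := hA.diff (measurableSet_singleton 0)
    have hBS : B ⊆ 𝒥 \ {0} := diff_subset_diff_left hA𝒥
    have hB𝒥 : B ⊆ 𝒥 := hBS.trans diff_subset
    have hLrB : L1.restrict B = L2.restrict B := by
      refine Measure.ext (fun E hE => ?_)
      rw [Measure.restrict_apply hE, Measure.restrict_apply hE]
      exact key _ (hE.inter hB) (inter_subset_right.trans hBS)
    have hint : ∫⁻ s in A, Sh s / K s ∂νC = ∫⁻ s in B, Sh s / K s ∂νC := by
      refine setLIntegral_congr (ae_eq_set.2 ⟨measure_mono_null ?_ hνC0,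
        measure_mono_null ?_ hνC0⟩)
      · intro x hx
        by_contra h
        exact hx.2 ⟨hx.1, h⟩
      · exact fun x hx => (hx.2 hx.1.1).elim
    have hμA : μt 0 A = μt 0 B := (measure_diff_null hμt0_0).symm
    have hc1 : μt 0 B = ∫⁻ s in B, Sh s ∂L1 := by
      rw [hL1def, restrict_withDensity hB,
        lintegral_withDensity_eq_lintegral_mul _ (f := fun s => (Sh s)⁻¹) (hShm.inv) hShm]
      rw [← setLIntegral_one B]
      refine setLIntegral_congr_fun hB (fun s hs => ?_)
      have hspos := hSh_pos s (hB𝒥 hs)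
      exact (ENNReal.inv_mul_cancel (ne_of_gt hspos) (hShtop s)).symm
    have hc2 : ∫⁻ s in B, Sh s ∂L2 = ∫⁻ s in B, Sh s / K s ∂νC := by
      rw [hL2def, restrict_withDensity hB,
        lintegral_withDensity_eq_lintegral_mul _ (f := fun s => (K s)⁻¹) (hKm.inv) hShm]
      refine setLIntegral_congr_fun hB (fun s _ => ?_)
      simp only [Pi.mul_apply]
      rw [ENNReal.div_eq_inv_mul]
    calc μt 0 A = μt 0 B := hμA
      _ = ∫⁻ s in B, Sh s ∂L1 := hc1
      _ = ∫⁻ s in B, Sh s ∂L2 := by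
          rw [show ∫⁻ s in B, Sh s ∂L1 = ∫⁻ s, Sh s ∂(L1.restrict B) from rfl, hLrB]
      _ = ∫⁻ s in B, Sh s / K s ∂νC := hc2
      _ = ∫⁻ s in A, Sh s / K s ∂νC := hint.symm
  · -- (ii) → (i)
    intro hii t ht
    have hI𝒥 := hIoc𝒥 t ht
    have hres : (μt 0).restrict (Ioc 0 t) =
        (νC.restrict (Ioc 0 t)).withDensity (fun s => Sh s / K s) := by
      refine Measure.ext (fun E hE => ?_)
      rw [Measure.restrict_apply hE, withDensity_apply _ hE,
        Measure.restrict_restrict hE]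
      exact hii (E ∩ Ioc 0 t) (hE.inter measurableSet_Ioc)
        (inter_subset_right.trans hI𝒥)
    rw [hHc0 t, hH0 t]
    calc ∫⁻ s in Ioc 0 t, (Sh s)⁻¹ ∂(μt 0)
        = ∫⁻ s, (Sh s)⁻¹ ∂((νC.restrict (Ioc 0 t)).withDensity (fun s => Sh s / K s)) := by
          rw [show ∫⁻ s in Ioc 0 t, (Sh s)⁻¹ ∂(μt 0)
              = ∫⁻ s, (Sh s)⁻¹ ∂((μt 0).restrict (Ioc 0 t)) from rfl, hres]
      _ = ∫⁻ s in Ioc 0 t, ((fun s => Sh s / K s) * fun s => (Sh s)⁻¹) s ∂νC :=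
          lintegral_withDensity_eq_lintegral_mul _ (hShm.div hKm) (hShm.inv)
      _ = ∫⁻ s in Ioc 0 t, (K s)⁻¹ ∂νC := by
          refine setLIntegral_congr_fun measurableSet_Ioc (fun s hs => ?_)
          have hspos := hSh_pos s (hI𝒥 hs)
          simp only [Pi.mul_apply]
          rw [div_eq_mul_inv, mul_comm (Sh s) (K s)⁻¹, mul_assoc,
            ENNReal.mul_inv_cancel (ne_of_gt hspos) (hShtop s), mul_one]
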